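/- Let g = aff(ℂ) be the four-dimensional real Lie algebra with basis e₁,e₂,e₃,e₄ and nonzero brackets [e₁,e₃]=e₃, [e₁,e₄]=e₄, [e₂,e₃]=e₄, [e₂,e₄]=−e₃, and let J be the complex structure determined by Je₁ = e₂, Je₂ = −e₁, Je₃ = e₄, Je₄ = −e₃ (the complex structure satisfying J[x,y] = [Jx,y], which makes (g,J) a complex Lie algebra). Then every closed 2-form Ω on g satisfying Ω(Jx,Jy) = Ω(x,y) for all x,y is degenerate; in particular there is no symplectic structure on g compatible with J. -/

import Mathlib

section KahlerDefs

variable {L : Type*} [LieRing L] [LieAlgebra ℝ L]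

def IsComplexStructure (J : Module.End ℝ L) : Prop :=
  (∀ x, J (J x) = -x) ∧
  ∀ x y : L, ⁅J x, J y⁆ - ⁅x, y⁆ - J ⁅J x, y⁆ - J ⁅x, J y⁆ = 0

def IsSymplecticForm (ω : L →ₗ[ℝ] L →ₗ[ℝ] ℝ) : Prop :=
  (∀ x, ω x x = 0) ∧
  (∀ x, (∀ y, ω x y = 0) → x = 0) ∧
  ∀ x y z : L, ω ⁅x, y⁆ z + ω ⁅y, z⁆ x + ω ⁅z, x⁆ y = 0

def IsKahlerStructure (J : Module.End ℝ L) (ω : L →ₗ[ℝ] L →ₗ[ℝ] ℝ) : Prop :=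
  IsComplexStructure J ∧ IsSymplecticForm ω ∧ ∀ x y : L, ω (J x) (J y) = ω x y

def IsLeviCivita (J : Module.End ℝ L) (ω : L →ₗ[ℝ] L →ₗ[ℝ] ℝ)
    (D : L →ₗ[ℝ] L →ₗ[ℝ] L) : Prop :=
  ∀ x y z : L,
    2 * ω (J (D x y)) z = ω (J ⁅x, y⁆) z - ω (J ⁅y, z⁆) x + ω (J ⁅z, x⁆) y

noncomputable def ricci (D : L →ₗ[ℝ] L →ₗ[ℝ] L) (x y : L) : ℝ :=
  - LinearMap.trace ℝ L
      ((D x) ∘ₗ (D.flip y) - D.flip (D x y) - (D.flip y) ∘ₗ (LieAlgebra.ad ℝ L x))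

def IsFlat (D : L →ₗ[ℝ] L →ₗ[ℝ] L) : Prop :=
  ∀ x y z : L, D x (D y z) - D y (D x z) - D ⁅x, y⁆ z = 0

end KahlerDefs

section Models

variable (M : Type*) [LieRing M] [LieAlgebra ℝ M]

def IsRxH3 : Prop :=
  ∃ b : Module.Basis (Fin 4) ℝ M,
    ⁅b 0, b 1⁆ = b 2 ∧ ⁅b 0, b 2⁆ = 0 ∧ ⁅b 0, b 3⁆ = 0 ∧
    ⁅b 1, b 2⁆ = 0 ∧ ⁅b 1, b 3⁆ = 0 ∧ ⁅b 2, b 3⁆ = 0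

def IsR2xAffR : Prop :=
  ∃ b : Module.Basis (Fin 4) ℝ M,
    ⁅b 0, b 1⁆ = b 1 ∧ ⁅b 0, b 2⁆ = 0 ∧ ⁅b 0, b 3⁆ = 0 ∧
    ⁅b 1, b 2⁆ = 0 ∧ ⁅b 1, b 3⁆ = 0 ∧ ⁅b 2, b 3⁆ = 0

def IsRxE2 : Prop :=
  ∃ b : Module.Basis (Fin 4) ℝ M,
    ⁅b 0, b 1⁆ = -b 2 ∧ ⁅b 0, b 2⁆ = b 1 ∧ ⁅b 0, b 3⁆ = 0 ∧
    ⁅b 1, b 2⁆ = 0 ∧ ⁅b 1, b 3⁆ = 0 ∧ ⁅b 2, b 3⁆ = 0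

def IsAffRxAffR : Prop :=
  ∃ b : Module.Basis (Fin 4) ℝ M,
    ⁅b 0, b 1⁆ = b 1 ∧ ⁅b 0, b 2⁆ = 0 ∧ ⁅b 0, b 3⁆ = 0 ∧
    ⁅b 1, b 2⁆ = 0 ∧ ⁅b 1, b 3⁆ = 0 ∧ ⁅b 2, b 3⁆ = b 3

def IsAffC : Prop :=
  ∃ b : Module.Basis (Fin 4) ℝ M,
    ⁅b 0, b 1⁆ = 0 ∧ ⁅b 0, b 2⁆ = b 2 ∧ ⁅b 0, b 3⁆ = b 3 ∧
    ⁅b 1, b 2⁆ = b 3 ∧ ⁅b 1, b 3⁆ = -b 2 ∧ ⁅b 2, b 3⁆ = 0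

def IsR4m1m1 : Prop :=
  ∃ b : Module.Basis (Fin 4) ℝ M,
    ⁅b 3, b 0⁆ = b 0 ∧ ⁅b 3, b 1⁆ = -b 1 ∧ ⁅b 3, b 2⁆ = -b 2 ∧
    ⁅b 0, b 1⁆ = 0 ∧ ⁅b 0, b 2⁆ = 0 ∧ ⁅b 1, b 2⁆ = 0

def IsR4'0 (δ : ℝ) : Prop :=
  ∃ b : Module.Basis (Fin 4) ℝ M,
    ⁅b 3, b 0⁆ = b 0 ∧ ⁅b 3, b 1⁆ = -(δ • b 2) ∧ ⁅b 3, b 2⁆ = δ • b 1 ∧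
    ⁅b 0, b 1⁆ = 0 ∧ ⁅b 0, b 2⁆ = 0 ∧ ⁅b 1, b 2⁆ = 0

def IsD4 (lam : ℝ) : Prop :=
  ∃ b : Module.Basis (Fin 4) ℝ M,
    ⁅b 0, b 1⁆ = b 2 ∧ ⁅b 3, b 0⁆ = lam • b 0 ∧ ⁅b 3, b 1⁆ = (1 - lam) • b 1 ∧
    ⁅b 3, b 2⁆ = b 2 ∧ ⁅b 0, b 2⁆ = 0 ∧ ⁅b 1, b 2⁆ = 0

def IsD4' (δ : ℝ) : Prop :=
  ∃ b : Module.Basis (Fin 4) ℝ M,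
    ⁅b 0, b 1⁆ = b 2 ∧ ⁅b 3, b 0⁆ = (δ / 2) • b 0 - b 1 ∧
    ⁅b 3, b 1⁆ = b 0 + (δ / 2) • b 1 ∧ ⁅b 3, b 2⁆ = δ • b 2 ∧
    ⁅b 0, b 2⁆ = 0 ∧ ⁅b 1, b 2⁆ = 0

end Models

/-- On aff(ℂ) with the bi-invariant complex structure J (Je₁=e₂, Je₃=e₄),
every closed J-compatible 2-form is degenerate. -/
theorem affC_complex_structure_no_symplectic
    {L : Type*} [LieRing L] [LieAlgebra ℝ L]
    (b : Module.Basis (Fin 4) ℝ L)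
    (h01 : ⁅b 0, b 1⁆ = 0) (h02 : ⁅b 0, b 2⁆ = b 2) (h03 : ⁅b 0, b 3⁆ = b 3)
    (h12 : ⁅b 1, b 2⁆ = b 3) (h13 : ⁅b 1, b 3⁆ = -b 2) (h23 : ⁅b 2, b 3⁆ = 0)
    (J : Module.End ℝ L)
    (hJ0 : J (b 0) = b 1) (hJ1 : J (b 1) = -b 0)
    (hJ2 : J (b 2) = b 3) (hJ3 : J (b 3) = -b 2)
    (Ω : L →ₗ[ℝ] L →ₗ[ℝ] ℝ)
    (halt : ∀ x : L, Ω x x = 0)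
    (hclosed : ∀ x y z : L, Ω ⁅x, y⁆ z + Ω ⁅y, z⁆ x + Ω ⁅z, x⁆ y = 0)
    (hcompat : ∀ x y : L, Ω (J x) (J y) = Ω x y) :
    ∃ x : L, x ≠ 0 ∧ ∀ y : L, Ω x y = 0 := by
  have hskew : ∀ x y : L, Ω x y = -Ω y x := by
    intro x y
    have h := halt (x + y)
    simp [map_add, halt x, halt y] at h
    linarith
  -- Ω(b2, b3) = 0
  have h23' : Ω (b 2) (b 3) = 0 := by
    have h := hclosed (b 0) (b 2) (b 3)
    have h30 : ⁅b 3, b 0⁆ = -b 3 := by rw [← lie_skew, h03]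
    rw [h02, h23, h30] at h
    simp only [map_zero, LinearMap.zero_apply, map_neg, LinearMap.neg_apply] at h
    have := hskew (b 3) (b 2)
    linarith
  -- Ω(b0, b2) = 0 and Ω(b1, b3) = 0
  have hc02 : Ω (b 1) (b 3) = Ω (b 0) (b 2) := by
    have := hcompat (b 0) (b 2); rwa [hJ0, hJ2] at this
  have hcl013 : Ω (b 0) (b 2) + Ω (b 1) (b 3) = 0 := by
    have h := hclosed (b 0) (b 1) (b 3)
    have h30 : ⁅b 3, b 0⁆ = -b 3 := by rw [← lie_skew, h03]
    rw [h01, h13, h30] at h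
    simp only [map_zero, LinearMap.zero_apply, map_neg, LinearMap.neg_apply] at h
    have h1 := hskew (b 2) (b 0)
    have h2 := hskew (b 3) (b 1)
    linarith
  have h02' : Ω (b 0) (b 2) = 0 := by linarith
  have h13' : Ω (b 1) (b 3) = 0 := by linarith
  -- Ω(b1, b2) = 0
  have hc03 : Ω (b 0) (b 3) = -Ω (b 1) (b 2) := by
    have := hcompat (b 0) (b 3); rw [hJ0, hJ3] at this
    simp only [map_neg] at this
    linarith
  have hcl012 : Ω (b 1) (b 2) = Ω (b 0) (b 3) := by
    have h := hclosed (b 0) (b 1) (b 2)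
    have h20 : ⁅b 2, b 0⁆ = -b 2 := by rw [← lie_skew, h02]
    rw [h01, h12, h20] at h
    simp only [map_zero, LinearMap.zero_apply, map_neg, LinearMap.neg_apply] at h
    have h1 := hskew (b 3) (b 0)
    have h2 := hskew (b 2) (b 1)
    linarith
  have h12' : Ω (b 1) (b 2) = 0 := by linarith
  refine ⟨b 2, b.ne_zero 2, ?_⟩
  have hbasis : ∀ i, Ω (b 2) (b i) = 0 := by
    intro i
    fin_cases i
    · show Ω (b 2) (b 0) = 0
      have := hskew (b 2) (b 0); linarith
    · show Ω (b 2) (b 1) = 0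
      have := hskew (b 2) (b 1); linarith
    · exact halt (b 2)
    · exact h23'
  intro y
  have : Ω (b 2) = 0 := b.ext hbasis
  rw [this]; rfl
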